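/- Let 1 < p, r < ∞ and suppose the vector-valued Hardy–Littlewood maximal operator satisfies the weak-type bound ‖M(f⃗)‖_{L^{p,∞}(ℓ^r,ω)} ≤ C ‖f⃗‖_{L^{p,1}(ℓ^r,ω)} for all f⃗ ∈ L^{p,1}(ℓ^r,ω). Then ω ∈ A(p,1). -/

import Mathlib

open MeasureTheory Set ENNReal

noncomputable section

/-- The measure `ω(x) dx` on `ℝⁿ`. -/
def wMeas {n : ℕ} (ω : EuclideanSpace ℝ (Fin n) → ℝ≥0∞) :
    Measure (EuclideanSpace ℝ (Fin n)) := volume.withDensity ω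

/-- Distribution function of `f` with respect to the measure `ω dx`. -/
def distFn {n : ℕ} (ω f : EuclideanSpace ℝ (Fin n) → ℝ≥0∞) (s : ℝ≥0∞) : ℝ≥0∞ :=
  wMeas ω {x | s < f x}

/-- Decreasing rearrangement of `f` with respect to `ω dx`. -/
def rearr {n : ℕ} (ω f : EuclideanSpace ℝ (Fin n) → ℝ≥0∞) (t : ℝ≥0∞) : ℝ≥0∞ :=
  sInf {s : ℝ≥0∞ | distFn ω f s ≤ t}

/-- The weighted Lorentz quasinorm `‖f‖_{L^{p,q}(ω)}`; `q = ∞` gives the weak norm. -/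
def lorentzNorm {n : ℕ} (ω : EuclideanSpace ℝ (Fin n) → ℝ≥0∞) (p q : ℝ≥0∞)
    (f : EuclideanSpace ℝ (Fin n) → ℝ≥0∞) : ℝ≥0∞ :=
  if q = ∞ then ⨆ t : {t : ℝ // 0 < t},
      ENNReal.ofReal t.1 ^ (1 / p.toReal) * rearr ω f (ENNReal.ofReal t.1)
  else ((q / p) * ∫⁻ t in Ioi (0:ℝ),
      (ENNReal.ofReal t ^ (1 / p.toReal) * rearr ω f (ENNReal.ofReal t)) ^ q.toReal
        / ENNReal.ofReal t) ^ (1 / q.toReal)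

/-- Axis-parallel cubes in `ℝⁿ`. -/
def IsCube {n : ℕ} (Q : Set (EuclideanSpace ℝ (Fin n))) : Prop :=
  ∃ (c : EuclideanSpace ℝ (Fin n)) (h : ℝ), 0 < h ∧
    Q = {y | ∀ i, |y i - c i| ≤ h}

/-- Conjugate exponent in `ℝ≥0∞`. -/
def conjE (p : ℝ≥0∞) : ℝ≥0∞ := if p = ∞ then 1 else p / (p - 1)

/-- The class `A(p,q)` of weights. -/
def Apq {n : ℕ} (ω : EuclideanSpace ℝ (Fin n) → ℝ≥0∞) (p q : ℝ≥0∞) : Prop :=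
  ∃ C : ℝ≥0∞, 0 < C ∧ C < ∞ ∧ ∀ Q : Set (EuclideanSpace ℝ (Fin n)), IsCube Q →
    lorentzNorm ω p q (Q.indicator 1) *
      lorentzNorm ω (conjE p) (conjE q) (Q.indicator fun x => (ω x)⁻¹) ≤ C * volume Q

/-- The Muckenhoupt class `A_p`. -/
def IsMuckenhouptAp {n : ℕ} (ω : EuclideanSpace ℝ (Fin n) → ℝ≥0∞) (p : ℝ) : Prop :=
  ∃ C : ℝ≥0∞, C < ∞ ∧ ∀ Q : Set (EuclideanSpace ℝ (Fin n)), IsCube Q →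
    ((volume Q)⁻¹ * ∫⁻ x in Q, ω x) *
      ((volume Q)⁻¹ * ∫⁻ x in Q, (ω x) ^ (-(1 / (p - 1)))) ^ (p - 1) ≤ C

/-- Hardy–Littlewood maximal function over centered cubes, `ℝ≥0∞`-valued. -/
def HLMax {n : ℕ} (f : EuclideanSpace ℝ (Fin n) → ℝ≥0∞)
    (x : EuclideanSpace ℝ (Fin n)) : ℝ≥0∞ :=
  ⨆ h : {h : ℝ // 0 < h},
    (volume {y : EuclideanSpace ℝ (Fin n) | ∀ i, |y i - x i| ≤ h.1})⁻¹ *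
      ∫⁻ y in {y : EuclideanSpace ℝ (Fin n) | ∀ i, |y i - x i| ≤ h.1}, f y

/-- `|f⃗(x)|_r = (∑_k |f_k(x)|^r)^{1/r}`. -/
def vecLr {n : ℕ} (r : ℝ) (f : ℕ → EuclideanSpace ℝ (Fin n) → ℝ)
    (x : EuclideanSpace ℝ (Fin n)) : ℝ≥0∞ :=
  (∑' k, ENNReal.ofReal |f k x| ^ r) ^ (1 / r)

/-- `|M(f⃗)(x)|_r = (∑_k (M f_k)(x)^r)^{1/r}`. -/
def vecMaxLr {n : ℕ} (r : ℝ) (f : ℕ → EuclideanSpace ℝ (Fin n) → ℝ)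
    (x : EuclideanSpace ℝ (Fin n)) : ℝ≥0∞ :=
  (∑' k, (HLMax (fun y => ENNReal.ofReal |f k y|) x) ^ r) ^ (1 / r)


noncomputable section Aux

open MeasureTheory Set ENNReal

variable {n : ℕ}

theorem volume_cube (x : EuclideanSpace ℝ (Fin n)) {a : ℝ} (ha : 0 ≤ a) :
    volume {y : EuclideanSpace ℝ (Fin n) | ∀ i, |y i - x i| ≤ a} = ENNReal.ofReal (2*a) ^ n := by
  have hset : {y : EuclideanSpace ℝ (Fin n) | ∀ i, |y i - x i| ≤ a}
      = ((MeasurableEquiv.toLp 2 (Fin n → ℝ)).symm) ⁻¹'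
        (Set.univ.pi fun i => Icc (x i - a) (x i + a)) := by
    ext y
    simp only [mem_setOf_eq, mem_preimage, mem_pi, mem_univ, forall_true_left, mem_Icc,
      MeasurableEquiv.coe_toLp_symm]
    refine forall_congr' fun i => ?_
    rw [abs_sub_le_iff]
    constructor
    · rintro ⟨h1, h2⟩; exact ⟨by linarith, by linarith⟩
    · rintro ⟨h1, h2⟩; exact ⟨by linarith, by linarith⟩
  rw [hset, (EuclideanSpace.volume_preserving_symm_measurableEquiv_toLp (Fin n)).measure_preimage
    (MeasurableSet.univ_pi fun i => measurableSet_Icc).nullMeasurableSet]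
  rw [volume_pi_pi]
  simp only [Real.volume_Icc]
  have : ∀ i : Fin n, ENNReal.ofReal (x i + a - (x i - a)) = ENNReal.ofReal (2*a) := by
    intro i; congr 1; ring
  simp_rw [this]
  rw [Finset.prod_const, Finset.card_univ, Fintype.card_fin]

theorem measurableSet_cube (x : EuclideanSpace ℝ (Fin n)) (a : ℝ) :
    MeasurableSet {y : EuclideanSpace ℝ (Fin n) | ∀ i, |y i - x i| ≤ a} := by
  have : {y : EuclideanSpace ℝ (Fin n) | ∀ i, |y i - x i| ≤ a}
      = ⋂ i, {y : EuclideanSpace ℝ (Fin n) | |y i - x i| ≤ a} := by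
    ext y; simp
  rw [this]
  refine MeasurableSet.iInter fun i => ?_
  have hm : Measurable fun y : EuclideanSpace ℝ (Fin n) => |y i - x i| := by
    have h1 : Measurable fun y : EuclideanSpace ℝ (Fin n) => y i :=
      ((MeasurableEquiv.toLp 2 (Fin n → ℝ)).symm).measurable.eval
    fun_prop
  exact measurableSet_le hm measurable_const

theorem helper_sup {a c S : ℝ≥0∞} {β : ℝ} (hβ : 0 < β)
    (h : ∀ t : ℝ, 0 < t → ENNReal.ofReal t < a → ENNReal.ofReal t ^ β * c ≤ S) :
    a ^ β * c ≤ S := by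
  rcases eq_or_ne c 0 with rfl | hc
  · simp
  rcases eq_or_ne a 0 with rfl | ha
  · rw [ENNReal.zero_rpow_of_pos hβ, zero_mul]; exact zero_le
  rcases eq_or_ne a ⊤ with rfl | hat
  · have key : ∀ m : ℕ, ENNReal.ofReal ((m : ℝ) + 1) * c ≤ S := by
      intro m
      have ht : (0:ℝ) < ((m:ℝ)+1) ^ (1/β) := by positivity
      have := h _ ht (ofReal_lt_top)
      rwa [ENNReal.ofReal_rpow_of_pos ht, ← Real.rpow_mul (by positivity),
        one_div, inv_mul_cancel₀ hβ.ne', Real.rpow_one] at this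
    have htop : (⊤:ℝ≥0∞) ≤ S := by
      have h1 : (⨆ m : ℕ, ENNReal.ofReal ((m:ℝ)+1) * c) ≤ S := iSup_le key
      have h2 : (⨆ m : ℕ, ENNReal.ofReal ((m:ℝ)+1) * c)
          = (⨆ m : ℕ, ENNReal.ofReal ((m:ℝ)+1)) * c := by
        rw [ENNReal.iSup_mul]
      have h3 : (⨆ m : ℕ, ENNReal.ofReal ((m:ℝ)+1)) = ⊤ := by
        rw [eq_top_iff, ← ENNReal.iSup_natCast]
        refine iSup_le fun m => ?_
        refine le_iSup_of_le m ?_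
        rw [← ENNReal.ofReal_natCast m]
        exact ENNReal.ofReal_le_ofReal (by linarith)
      rw [h2, h3, ENNReal.top_mul hc] at h1
      exact h1
    exact le_top.trans htop
  · refine le_of_forall_lt_one_mul_le fun ε hε => ?_
    rcases eq_or_ne ε 0 with rfl | hε0
    · simp
    set τ := ε ^ (1/β) * a with hτ
    have hτlt : τ < a := by
      have h1 : ε ^ (1/β) < 1 := ENNReal.rpow_lt_one hε (by positivity)
      calc τ < 1 * a := by
              exact ENNReal.mul_lt_mul_left ha hat h1
        _ = a := one_mul a
    have hτ0 : τ ≠ 0 := by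
      apply mul_ne_zero _ ha
      simp only [ne_eq, ENNReal.rpow_eq_zero_iff, not_or]
      constructor
      · rintro ⟨rfl, -⟩; exact hε0 rfl
      · rintro ⟨rfl, -⟩; exact (hε.trans_le le_top).ne rfl
    have hτt : τ ≠ ⊤ := (hτlt.trans_le le_top).ne
    have ht0 : 0 < τ.toReal := ENNReal.toReal_pos hτ0 hτt
    have := h τ.toReal ht0 (by rwa [ENNReal.ofReal_toReal hτt])
    rw [ENNReal.ofReal_toReal hτt] at this
    have hτβ : τ ^ β = ε * a ^ β := by
      rw [hτ, ENNReal.mul_rpow_of_nonneg _ _ hβ.le, ← ENNReal.rpow_mul,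
        one_div, inv_mul_cancel₀ hβ.ne', ENNReal.rpow_one]
    calc ε * (a ^ β * c) = τ ^ β * c := by rw [hτβ, mul_assoc]
      _ ≤ S := this

theorem int_Ioo {A β : ℝ} (hβ0 : 0 < β) (hβ1 : β < 1) (hA : 0 < A) :
    ∫⁻ t in Ioo (0:ℝ) A, ENNReal.ofReal (t^(β-1)) = ENNReal.ofReal (A^β/β) := by
  have hInt : IntervalIntegrable (fun t : ℝ => t^(β-1)) volume 0 A :=
    intervalIntegral.intervalIntegrable_rpow' (by linarith)
  have hIntOn : IntegrableOn (fun t : ℝ => t^(β-1)) (Ioo 0 A) volume := by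
    have h2 := (intervalIntegrable_iff_integrableOn_Ioc_of_le hA.le).1 hInt
    exact h2.mono_set Ioo_subset_Ioc_self
  rw [← ofReal_integral_eq_lintegral_ofReal hIntOn
    ((ae_restrict_iff' measurableSet_Ioo).2 (ae_of_all _ fun t ht => Real.rpow_nonneg ht.1.le _))]
  congr 1
  rw [← integral_Ioc_eq_integral_Ioo, ← intervalIntegral.integral_of_le hA.le,
    integral_rpow (Or.inl (by linarith))]
  rw [sub_add_cancel, Real.zero_rpow hβ0.ne', sub_zero]

theorem int_Ioi_top {β : ℝ} (hβ0 : 0 < β) (hβ1 : β < 1) :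
    ∫⁻ t in Ioi (0:ℝ), ENNReal.ofReal (t^(β-1)) = ⊤ := by
  by_contra h
  set L := ∫⁻ t in Ioi (0:ℝ), ENNReal.ofReal (t^(β-1)) with hL
  have hLt : L ≠ ⊤ := h
  have hbound : ∀ A : ℝ, 0 < A → ENNReal.ofReal (A^β/β) ≤ L := by
    intro A hA
    rw [← int_Ioo hβ0 hβ1 hA]
    exact lintegral_mono_set (fun t ht => ht.1)
  set A := (β * (L.toReal + 1)) ^ (1/β) with hA
  have hApos : 0 < A := by
    have : 0 < L.toReal + 1 := by positivity
    positivity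
  have hAβ : A ^ β = β * (L.toReal + 1) := by
    rw [hA, ← Real.rpow_mul (by positivity), one_div, inv_mul_cancel₀ hβ0.ne', Real.rpow_one]
  have := hbound A hApos
  have hsimp : β * (L.toReal + 1) / β = L.toReal + 1 := by field_simp
  rw [hAβ, hsimp] at this
  have h2 : L + 1 ≤ L := by
    calc L + 1 = ENNReal.ofReal (L.toReal + 1) := by
          rw [ENNReal.ofReal_add ENNReal.toReal_nonneg zero_le_one, ENNReal.ofReal_toReal hLt,
            ENNReal.ofReal_one]
      _ ≤ L := this
  exact absurd h2 (not_le.mpr (ENNReal.lt_add_right hLt one_ne_zero))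

theorem helper_int {β : ℝ} (a : ℝ≥0∞) (hβ0 : 0 < β) (hβ1 : β < 1) :
    ∫⁻ t in Ioi (0:ℝ), (if ENNReal.ofReal t < a then ENNReal.ofReal (t^(β-1)) else 0)
      = ENNReal.ofReal (1/β) * a ^ β := by
  rcases eq_or_ne a 0 with rfl | ha0
  · simp [ENNReal.zero_rpow_of_pos hβ0]
  rcases eq_or_ne a ⊤ with rfl | hat
  · have : ∀ t : ℝ, (if ENNReal.ofReal t < ⊤ then ENNReal.ofReal (t^(β-1)) else 0)
        = ENNReal.ofReal (t^(β-1)) := fun t => if_pos ofReal_lt_top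
    simp_rw [this]
    rw [int_Ioi_top hβ0 hβ1, ENNReal.top_rpow_of_pos hβ0, ENNReal.mul_top]
    simp only [ne_eq, ENNReal.ofReal_eq_zero, not_le]
    positivity
  · set A := a.toReal with hA
    have hApos : 0 < A := ENNReal.toReal_pos ha0 hat
    have hcong : ∀ t ∈ Ioi (0:ℝ),
        (if ENNReal.ofReal t < a then ENNReal.ofReal (t^(β-1)) else 0)
          = (Ioo (0:ℝ) A).indicator (fun t => ENNReal.ofReal (t^(β-1))) t := by
      intro t ht
      have hiff : ENNReal.ofReal t < a ↔ t < A := by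
        rw [← ENNReal.ofReal_toReal hat, ← hA, ENNReal.ofReal_lt_ofReal_iff hApos]
      by_cases hc : t < A
      · rw [if_pos (hiff.2 hc), indicator_of_mem (mem_Ioo.mpr ⟨ht, hc⟩)]
      · rw [if_neg (fun hlt => hc (hiff.1 hlt)),
          indicator_of_notMem (fun hm => hc (mem_Ioo.1 hm).2)]
    rw [setLIntegral_congr_fun_ae measurableSet_Ioi (ae_of_all _ hcong)]
    rw [lintegral_indicator measurableSet_Ioo _, Measure.restrict_restrict measurableSet_Ioo,
      inter_eq_left.mpr (fun t ht => ht.1)]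
    rw [int_Ioo hβ0 hβ1 hApos]
    have hring : A ^ β / β = (1/β) * A ^ β := by ring
    rw [hring, ENNReal.ofReal_mul (by positivity : (0:ℝ) ≤ 1/β),
      ← ENNReal.ofReal_rpow_of_pos hApos, ENNReal.ofReal_toReal hat]

theorem distFn_indicator (ω : EuclideanSpace ℝ (Fin n) → ℝ≥0∞)
    (S : Set (EuclideanSpace ℝ (Fin n))) (s : ℝ≥0∞) :
    distFn ω (S.indicator 1) s = if s < 1 then wMeas ω S else 0 := by
  unfold distFn
  by_cases hs : s < 1
  · rw [if_pos hs]
    congr 1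
    ext x
    simp only [mem_setOf_eq, Set.indicator_apply, Pi.one_apply]
    by_cases hx : x ∈ S
    · simp [hx, hs]
    · simp [hx]
  · rw [if_neg hs]
    have : {x | s < S.indicator 1 x} = ∅ := by
      ext x
      simp only [mem_setOf_eq, Set.indicator_apply, Pi.one_apply, mem_empty_iff_false,
        iff_false, not_lt]
      by_cases hx : x ∈ S
      · simp [hx, not_lt.1 hs]
      · simp [hx]
    rw [this, measure_empty]

theorem rearr_indicator (ω : EuclideanSpace ℝ (Fin n) → ℝ≥0∞)
    (S : Set (EuclideanSpace ℝ (Fin n))) (t : ℝ≥0∞) :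
    rearr ω (S.indicator 1) t = if t < wMeas ω S then 1 else 0 := by
  unfold rearr
  simp_rw [distFn_indicator]
  by_cases ht : t < wMeas ω S
  · rw [if_pos ht]
    have hset : {s : ℝ≥0∞ | (if s < 1 then wMeas ω S else 0) ≤ t} = Ici 1 := by
      ext s
      by_cases hs : s < 1
      · simp only [mem_setOf_eq, if_pos hs, mem_Ici]
        exact iff_of_false (not_le.2 ht) (not_le.2 hs)
      · simp only [mem_setOf_eq, if_neg hs, mem_Ici]
        exact iff_of_true zero_le (not_lt.1 hs)
    rw [hset, csInf_Ici]
  · rw [if_neg ht]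
    refine le_antisymm (sInf_le ?_) zero_le
    simp only [mem_setOf_eq, if_pos zero_lt_one]
    exact not_lt.1 ht

theorem lorentz1_indicator {p : ℝ} (hp1 : 1 < p) (ω : EuclideanSpace ℝ (Fin n) → ℝ≥0∞)
    (S : Set (EuclideanSpace ℝ (Fin n))) :
    lorentzNorm ω (ENNReal.ofReal p) 1 (S.indicator 1) = (wMeas ω S) ^ (1/p) := by
  have hp0 : 0 < p := lt_trans one_pos hp1
  have hβ0 : 0 < 1/p := by positivity
  have hβ1 : 1/p < 1 := by rw [div_lt_one hp0]; exact hp1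
  rw [lorentzNorm, if_neg one_ne_top]
  have htR : ((1:ℝ≥0∞)).toReal = 1 := ENNReal.toReal_one
  have hPR : (ENNReal.ofReal p).toReal = p := ENNReal.toReal_ofReal hp0.le
  rw [htR, hPR]
  have hcong : ∀ t ∈ Ioi (0:ℝ),
      (ENNReal.ofReal t ^ (1/p) * rearr ω (S.indicator 1) (ENNReal.ofReal t)) ^ (1:ℝ)
        / ENNReal.ofReal t
      = (if ENNReal.ofReal t < wMeas ω S then ENNReal.ofReal (t^(1/p-1)) else 0) := by
    intro t ht
    have ht' : (0:ℝ) < t := ht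
    have hτ0 : ENNReal.ofReal t ≠ 0 := by simp [ht'.le, ht']
    have hτt : ENNReal.ofReal t ≠ ⊤ := ofReal_ne_top
    rw [rearr_indicator, ENNReal.rpow_one]
    by_cases hc : ENNReal.ofReal t < wMeas ω S
    · rw [if_pos hc, if_pos hc, mul_one, ENNReal.div_eq_inv_mul, mul_comm,
        ← ENNReal.rpow_neg_one (ENNReal.ofReal t),
        ← ENNReal.rpow_add _ _ hτ0 hτt, ENNReal.ofReal_rpow_of_pos ht', sub_eq_add_neg]
    · rw [if_neg hc, if_neg hc, mul_zero, ENNReal.zero_div]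
  rw [setLIntegral_congr_fun_ae measurableSet_Ioi (ae_of_all _ hcong),
    helper_int _ hβ0 hβ1]
  have h1p : (1:ℝ)/(1/p) = p := by field_simp
  rw [h1p, ← mul_assoc]
  have hP0 : (ENNReal.ofReal p) ≠ 0 := by simp [hp0]
  have h2 : 1 / ENNReal.ofReal p * ENNReal.ofReal p = 1 := by
    rw [one_div, ENNReal.inv_mul_cancel hP0 ofReal_ne_top]
  rw [h2, one_mul, one_div_one, ENNReal.rpow_one]

theorem weak_lower {P : ℝ≥0∞} {β : ℝ} (hβ : 0 < β) (hPβ : 1/P.toReal = β)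
    (ω F : EuclideanSpace ℝ (Fin n) → ℝ≥0∞) (Qs : Set (EuclideanSpace ℝ (Fin n)))
    {c : ℝ≥0∞} (hc : ∀ x ∈ Qs, c ≤ F x) :
    (wMeas ω Qs) ^ β * c ≤ lorentzNorm ω P ⊤ F := by
  rw [lorentzNorm, if_pos rfl]
  refine helper_sup hβ fun t ht hlt => ?_
  have hre : c ≤ rearr ω F (ENNReal.ofReal t) := by
    refine le_sInf fun s hs => ?_
    by_contra hsc
    push_neg at hsc
    have hsub : Qs ⊆ {x | s < F x} := fun x hx => lt_of_lt_of_le hsc (hc x hx)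
    have hthis : wMeas ω Qs ≤ distFn ω F s := measure_mono hsub
    exact absurd hs (not_le.2 (lt_of_lt_of_le hlt hthis))
  calc ENNReal.ofReal t ^ β * c ≤ ENNReal.ofReal t ^ β * rearr ω F (ENNReal.ofReal t) :=
        mul_le_mul_right hre _
    _ ≤ _ := by
        simp only [hPβ]
        exact le_iSup (fun t' : {t' : ℝ // 0 < t'} =>
          ENNReal.ofReal t'.1 ^ β * rearr ω F (ENNReal.ofReal t'.1)) ⟨t, ht⟩

theorem hlmax_lower {c₀ : EuclideanSpace ℝ (Fin n)} {h : ℝ} (hh : 0 < h)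
    (f : EuclideanSpace ℝ (Fin n) → ℝ≥0∞) {x : EuclideanSpace ℝ (Fin n)}
    (hx : x ∈ {y : EuclideanSpace ℝ (Fin n) | ∀ i, |y i - c₀ i| ≤ h}) :
    ((2:ℝ≥0∞)^n * volume {y : EuclideanSpace ℝ (Fin n) | ∀ i, |y i - c₀ i| ≤ h})⁻¹ *
      (∫⁻ y in {y : EuclideanSpace ℝ (Fin n) | ∀ i, |y i - c₀ i| ≤ h}, f y) ≤ HLMax f x := by
  set Q := {y : EuclideanSpace ℝ (Fin n) | ∀ i, |y i - c₀ i| ≤ h} with hQ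
  have hsub : Q ⊆ {y : EuclideanSpace ℝ (Fin n) | ∀ i, |y i - x i| ≤ 2*h} := by
    intro y hy i
    have h1 := hy i
    have h2 := hx i
    have := abs_sub_abs_le_abs_sub (y i - c₀ i) (x i - c₀ i)
    have h3 : |y i - x i| ≤ |y i - c₀ i| + |x i - c₀ i| := by
      have := abs_sub (y i - c₀ i) (x i - c₀ i)
      calc |y i - x i| = |(y i - c₀ i) - (x i - c₀ i)| := by ring_nf
        _ ≤ |y i - c₀ i| + |x i - c₀ i| := abs_sub _ _
    linarith
  have hvol : volume {y : EuclideanSpace ℝ (Fin n) | ∀ i, |y i - x i| ≤ 2*h}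
      = (2:ℝ≥0∞)^n * volume Q := by
    have h24 : ENNReal.ofReal (2*(2*h)) = (2:ℝ≥0∞) * ENNReal.ofReal (2*h) := by
      rw [ENNReal.ofReal_mul (by norm_num : (0:ℝ) ≤ 2)]
      norm_num
    rw [volume_cube x (by linarith), hQ, volume_cube c₀ hh.le, h24, mul_pow]
  have hterm := le_iSup (fun h' : {h' : ℝ // 0 < h'} =>
    (volume {y : EuclideanSpace ℝ (Fin n) | ∀ i, |y i - x i| ≤ h'.1})⁻¹ *
      ∫⁻ y in {y : EuclideanSpace ℝ (Fin n) | ∀ i, |y i - x i| ≤ h'.1}, f y)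
    ⟨2*h, by linarith⟩
  refine le_trans ?_ hterm
  simp only
  rw [hvol]
  exact mul_le_mul_right (lintegral_mono_set hsub) _

theorem vecLr_single {r : ℝ} (hr : 0 < r) (E : Set (EuclideanSpace ℝ (Fin n))) :
    vecLr r (fun k x => if k = 0 then E.indicator (fun _ => (1:ℝ)) x else 0)
      = E.indicator 1 := by
  funext x
  unfold vecLr
  rw [tsum_eq_single 0 (fun k hk => by
    simp only [if_neg hk, abs_zero, ENNReal.ofReal_zero]
    exact ENNReal.zero_rpow_of_pos hr)]
  simp only [if_pos rfl]
  by_cases hx : x ∈ E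
  · rw [indicator_of_mem hx, indicator_of_mem hx]
    norm_num
  · rw [indicator_of_notMem hx, indicator_of_notMem hx]
    simp [hr, ENNReal.zero_rpow_of_pos hr,
      ENNReal.zero_rpow_of_pos (show (0:ℝ) < 1/r by positivity)]

theorem hlmax_zero (x : EuclideanSpace ℝ (Fin n)) :
    HLMax (fun _ => 0) x = 0 := by
  unfold HLMax
  simp

theorem vecMaxLr_single {r : ℝ} (hr : 0 < r) (E : Set (EuclideanSpace ℝ (Fin n))) :
    vecMaxLr r (fun k x => if k = 0 then E.indicator (fun _ => (1:ℝ)) x else 0)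
      = HLMax (E.indicator 1) := by
  funext x
  unfold vecMaxLr
  rw [tsum_eq_single 0 (fun k hk => by
    simp only [if_neg hk, abs_zero, ENNReal.ofReal_zero]
    rw [hlmax_zero]
    exact ENNReal.zero_rpow_of_pos hr)]
  have hfun : (fun y => ENNReal.ofReal |if (0:ℕ) = 0 then E.indicator (fun _ => (1:ℝ)) y else 0|)
      = E.indicator 1 := by
    funext y
    simp only [if_pos rfl]
    by_cases hy : y ∈ E
    · rw [indicator_of_mem hy, indicator_of_mem hy]
      norm_num
    · rw [indicator_of_notMem hy, indicator_of_notMem hy]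
      simp
  rw [hfun, ← ENNReal.rpow_mul, mul_one_div_cancel hr.ne', ENNReal.rpow_one]

end Aux

end
/-- If `1 < p, r < ∞` and the vector-valued maximal operator satisfies
`‖M(f⃗)‖_{L^{p,∞}(ℓ^r,ω)} ≤ C ‖f⃗‖_{L^{p,1}(ℓ^r,ω)}` for all `f⃗`, then `ω ∈ A(p,1)`. -/
theorem stmt9 {n : ℕ} (p r : ℝ) (hp1 : 1 < p) (hr1 : 1 < r)
    (ω : EuclideanSpace ℝ (Fin n) → ℝ≥0∞)
    (hbound : ∃ C : ℝ≥0∞, 0 < C ∧ C < ∞ ∧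
      ∀ f : ℕ → EuclideanSpace ℝ (Fin n) → ℝ, (∀ k, Measurable (f k)) →
        lorentzNorm ω (ENNReal.ofReal p) ∞ (vecMaxLr r f)
          ≤ C * lorentzNorm ω (ENNReal.ofReal p) 1 (vecLr r f)) :
    Apq ω (ENNReal.ofReal p) 1 := by
  obtain ⟨C₀, hC00, hC0t, hB⟩ := hbound
  obtain ⟨g, hgm, hgle, hgw⟩ := exists_measurable_le_withDensity_eq volume ω
  have hp0 : 0 < p := lt_trans one_pos hp1
  have hr0 : 0 < r := lt_trans one_pos hr1
  have hβ0 : 0 < 1/p := by positivity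
  have hP0 : ENNReal.ofReal p ≠ 0 := by simp [hp0]
  have hPt : ENNReal.ofReal p ≠ ⊤ := ofReal_ne_top
  have hconj1 : conjE 1 = ⊤ := by
    rw [conjE, if_neg one_ne_top]
    simp
  have hconjval : 1/((conjE (ENNReal.ofReal p)).toReal) = 1 - 1/p := by
    rw [conjE, if_neg hPt, ENNReal.toReal_div, ENNReal.toReal_ofReal hp0.le]
    rw [show (ENNReal.ofReal p - 1) = ENNReal.ofReal (p-1) by
      rw [ENNReal.ofReal_sub p zero_le_one, ENNReal.ofReal_one]]
    rw [ENNReal.toReal_ofReal (by linarith)]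
    rw [one_div_div]
    field_simp
  have h2n0 : ((2:ℝ≥0∞)^n) ≠ 0 := pow_ne_zero _ (by norm_num)
  have h2nt : ((2:ℝ≥0∞)^n) ≠ ⊤ := by
    exact ENNReal.pow_ne_top ENNReal.ofNat_ne_top
  refine ⟨2^n * C₀, ?_, ?_, ?_⟩
  · exact ENNReal.mul_pos h2n0 hC00.ne'
  · exact ENNReal.mul_lt_top (lt_top_iff_ne_top.2 h2nt) hC0t
  rintro Q ⟨c₀, h, hh, rfl⟩
  set Qc := {y : EuclideanSpace ℝ (Fin n) | ∀ i, |y i - c₀ i| ≤ h} with hQc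
  have hQm : MeasurableSet Qc := measurableSet_cube c₀ h
  have hQvol : volume Qc = ENNReal.ofReal (2*h) ^ n := volume_cube c₀ hh.le
  have hQvol0 : volume Qc ≠ 0 := by
    rw [hQvol]
    exact pow_ne_zero _ (by simp; linarith)
  have hQvolt : volume Qc ≠ ⊤ := by
    rw [hQvol]
    exact ENNReal.pow_ne_top ofReal_ne_top
  have hD0 : (2:ℝ≥0∞)^n * volume Qc ≠ 0 := mul_ne_zero h2n0 hQvol0
  have hDt : (2:ℝ≥0∞)^n * volume Qc ≠ ⊤ := ENNReal.mul_ne_top h2nt hQvolt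
  rw [lorentz1_indicator hp1 ω Qc, hconj1, lorentzNorm, if_pos rfl]
  simp only [hconjval]
  rw [mul_comm ((wMeas ω Qc) ^ (1/p)), ENNReal.iSup_mul]
  refine iSup_le ?_
  rintro ⟨t, ht⟩
  simp only
  set τ := ENNReal.ofReal t with hτdef
  set R := rearr ω (Qc.indicator fun x => (ω x)⁻¹) τ with hR
  have hτ0 : τ ≠ 0 := by simp [hτdef, ht]
  have key : ∀ s : ℝ≥0∞, s < R →
      s * (τ ^ (1 - 1/p) * (wMeas ω Qc) ^ (1/p)) ≤ 2^n * C₀ * volume Qc := by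
    intro s hsR
    rcases eq_or_ne s 0 with rfl | hs0
    · simp
    have hst : s ≠ ⊤ := (lt_of_lt_of_le hsR le_top).ne
    have hd : τ < distFn ω (Qc.indicator fun x => (ω x)⁻¹) s := by
      by_contra hle
      push_neg at hle
      have hRs : R ≤ s := by
        rw [hR]
        exact sInf_le hle
      exact absurd hsR (not_lt.2 hRs)
    set E := Qc ∩ {x | g x < s⁻¹} with hE
    have hEm : MeasurableSet E := hQm.inter (hgm measurableSet_Iio)
    have hsub : {x | s < Qc.indicator (fun x => (ω x)⁻¹) x} ⊆ E := by
      intro x hx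
      simp only [mem_setOf_eq] at hx
      by_cases hxQ : x ∈ Qc
      · rw [indicator_of_mem hxQ] at hx
        exact ⟨hxQ, lt_of_le_of_lt (hgle x) (ENNReal.lt_inv_iff_lt_inv.1 hx)⟩
      · rw [indicator_of_notMem hxQ] at hx
        exact absurd hx (by simp)
    have hτE : τ < wMeas ω E := lt_of_lt_of_le hd (measure_mono hsub)
    have hwE0 : wMeas ω E ≠ 0 := by
      intro h0
      rw [h0] at hτE
      exact absurd hτE (by simp)
    have hwEint : wMeas ω E = ∫⁻ x in E, g x := by
      rw [wMeas, ← hgw, withDensity_apply _ hEm]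
    have hEvol : volume E ≤ volume Qc := measure_mono inter_subset_left
    have hEvolt : volume E ≠ ⊤ := (lt_of_le_of_lt hEvol (lt_top_iff_ne_top.2 hQvolt)).ne
    have hwEle : wMeas ω E ≤ s⁻¹ * volume E := by
      rw [hwEint]
      calc ∫⁻ x in E, g x
          ≤ ∫⁻ _ in E, s⁻¹ :=
            lintegral_mono_ae ((ae_restrict_iff' hEm).2 (ae_of_all _ fun x hx => hx.2.le))
        _ = s⁻¹ * volume E := by rw [setLIntegral_const]
    have hswE : s * wMeas ω E ≤ volume E := by
      calc s * wMeas ω E ≤ s * (s⁻¹ * volume E) := mul_le_mul_right hwEle s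
        _ = (s * s⁻¹) * volume E := (mul_assoc _ _ _).symm
        _ = volume E := by rw [ENNReal.mul_inv_cancel hs0 hst, one_mul]
    have hwEt : wMeas ω E ≠ ⊤ := by
      intro htop
      rw [htop, ENNReal.mul_top hs0] at hswE
      exact hEvolt (eq_top_iff.2 hswE)
    set fseq : ℕ → EuclideanSpace ℝ (Fin n) → ℝ :=
      fun k x => if k = 0 then E.indicator (fun _ => (1:ℝ)) x else 0 with hfseq
    have hmeas : ∀ k, Measurable (fseq k) := by
      intro k
      by_cases hk : k = 0
      · subst hk
        simp only [hfseq, if_pos rfl]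
        exact (measurable_const (a := (1:ℝ))).indicator hEm
      · simp only [hfseq, if_neg hk]
        exact measurable_const
    have happ := hB fseq hmeas
    rw [hfseq] at happ
    rw [vecMaxLr_single hr0 E, vecLr_single hr0 E, lorentz1_indicator hp1 ω E] at happ
    have hintE : ∫⁻ y in Qc, E.indicator 1 y ∂volume = volume E := by
      rw [lintegral_indicator hEm]
      simp only [Pi.one_apply]
      rw [setLIntegral_one, Measure.restrict_apply hEm, inter_eq_left.mpr inter_subset_left]
    have hlow : (wMeas ω Qc) ^ (1/p) * (((2:ℝ≥0∞)^n * volume Qc)⁻¹ * volume E)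
        ≤ lorentzNorm ω (ENNReal.ofReal p) ⊤ (HLMax (E.indicator 1)) := by
      refine weak_lower hβ0 (by rw [ENNReal.toReal_ofReal hp0.le]) ω _ Qc ?_
      intro x hx
      have h1 := hlmax_lower hh (E.indicator 1) hx
      rwa [hintE] at h1
    have hmain : (wMeas ω Qc) ^ (1/p) * (((2:ℝ≥0∞)^n * volume Qc)⁻¹ * volume E)
        ≤ C₀ * (wMeas ω E) ^ (1/p) := le_trans hlow happ
    have hcancel : ((2:ℝ≥0∞)^n * volume Qc) *
        ((wMeas ω Qc) ^ (1/p) * (((2:ℝ≥0∞)^n * volume Qc)⁻¹ * volume E))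
        = (wMeas ω Qc) ^ (1/p) * volume E := by
      have hinv : ((2:ℝ≥0∞)^n * volume Qc) * ((2:ℝ≥0∞)^n * volume Qc)⁻¹ = 1 :=
        ENNReal.mul_inv_cancel hD0 hDt
      calc ((2:ℝ≥0∞)^n * volume Qc) *
            ((wMeas ω Qc) ^ (1/p) * (((2:ℝ≥0∞)^n * volume Qc)⁻¹ * volume E))
          = (((2:ℝ≥0∞)^n * volume Qc) * ((2:ℝ≥0∞)^n * volume Qc)⁻¹) *
              ((wMeas ω Qc) ^ (1/p) * volume E) := by ring
        _ = (wMeas ω Qc) ^ (1/p) * volume E := by rw [hinv, one_mul]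
    have hmain2 : (wMeas ω Qc) ^ (1/p) * volume E
        ≤ ((2:ℝ≥0∞)^n * volume Qc) * (C₀ * (wMeas ω E) ^ (1/p)) := by
      have := mul_le_mul_right hmain ((2:ℝ≥0∞)^n * volume Qc)
      rwa [hcancel] at this
    have hsle : s ≤ volume E * (wMeas ω E)⁻¹ := by
      calc s = s * wMeas ω E * (wMeas ω E)⁻¹ := by
            rw [mul_assoc, ENNReal.mul_inv_cancel hwE0 hwEt, mul_one]
        _ ≤ volume E * (wMeas ω E)⁻¹ := mul_le_mul_left hswE _
    have hτle : τ ^ (1-1/p) ≤ (wMeas ω E) ^ (1-1/p) :=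
      ENNReal.rpow_le_rpow hτE.le (by
        have h1 : 1/p < 1 := by rw [div_lt_one hp0]; exact hp1
        linarith)
    calc s * (τ ^ (1 - 1/p) * (wMeas ω Qc) ^ (1/p))
        ≤ s * ((wMeas ω E) ^ (1-1/p) * (wMeas ω Qc) ^ (1/p)) :=
          mul_le_mul_right (mul_le_mul_left hτle _) s
      _ ≤ (volume E * (wMeas ω E)⁻¹) * ((wMeas ω E) ^ (1-1/p) * (wMeas ω Qc) ^ (1/p)) :=
          mul_le_mul_left hsle _
      _ = ((wMeas ω Qc) ^ (1/p) * volume E) * ((wMeas ω E)⁻¹ * (wMeas ω E) ^ (1-1/p)) := by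
          ring
      _ = ((wMeas ω Qc) ^ (1/p) * volume E) * (wMeas ω E) ^ (-(1/p)) := by
          rw [← ENNReal.rpow_neg_one (wMeas ω E), ← ENNReal.rpow_add _ _ hwE0 hwEt]
          congr 1
          congr 1
          ring
      _ ≤ (((2:ℝ≥0∞)^n * volume Qc) * (C₀ * (wMeas ω E) ^ (1/p))) * (wMeas ω E) ^ (-(1/p)) :=
          mul_le_mul_left hmain2 _
      _ = ((2:ℝ≥0∞)^n * C₀ * volume Qc) * ((wMeas ω E) ^ (1/p) * (wMeas ω E) ^ (-(1/p))) := by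
          ring
      _ = 2^n * C₀ * volume Qc := by
          rw [← ENNReal.rpow_add _ _ hwE0 hwEt]
          simp
  have hsup : (⨆ s : Iio R, (s:ℝ≥0∞)) = R := by
    refine le_antisymm (iSup_le fun s => le_of_lt s.2) ?_
    refine le_of_forall_lt fun b hb => ?_
    obtain ⟨d, hbd, hdR⟩ := exists_between hb
    exact lt_of_lt_of_le hbd (le_iSup (fun s : Iio R => (s:ℝ≥0∞)) ⟨d, hdR⟩)
  calc τ ^ (1 - 1/p) * R * (wMeas ω Qc) ^ (1/p)
      = R * (τ ^ (1 - 1/p) * (wMeas ω Qc) ^ (1/p)) := by ring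
    _ = (⨆ s : Iio R, (s:ℝ≥0∞)) * (τ ^ (1 - 1/p) * (wMeas ω Qc) ^ (1/p)) := by rw [hsup]
    _ = ⨆ s : Iio R, (s:ℝ≥0∞) * (τ ^ (1 - 1/p) * (wMeas ω Qc) ^ (1/p)) :=
        ENNReal.iSup_mul _ _
    _ ≤ 2^n * C₀ * volume Qc := iSup_le fun s => key s s.2
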